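/- Let G be a finitely generated group. Then G is REC^∀-flat as a group if and only if G has decidable subgroup membership problem, i.e. for every finitely generated subgroup H ≤ G the language π⁻¹(H) ⊆ A* of words over a finite generating set A of G representing elements of H is decidable. -/

import Mathlib

/-!  Common framework: classes of languages over finite alphabets, `C^∀`- and
`C^∃`-subsets of finitely generated monoids and groups, closure properties
(cone, full semi-AFL), and `C^•`-flatness.  -/

/-- A class of languages: for each finite alphabet `Fin n`, a collection of languages over it. -/
abbrev LangClass : Type := ∀ n : ℕ, Set (Set (List (Fin n)))

/-- `π` is a surjective monoid homomorphism from the free monoid on `Fin n`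
(words, under concatenation) onto `M`; i.e. it presents `M` as a monoid generated
by the finite set `Fin n`. -/
structure FreeHomOnto {n : ℕ} (M : Type) [Monoid M] (π : List (Fin n) → M) : Prop where
  map_nil : π [] = 1
  map_append : ∀ u v : List (Fin n), π (u ++ v) = π u * π v
  surjective : Function.Surjective π

/-- `X ⊆ M` is a `C^∀`-subset of `M` w.r.t. the generating map `π`:
the full preimage `π⁻¹(X)` is a language of the class `C`. -/
def CForall (C : LangClass) {n : ℕ} {M : Type} [Monoid M]
    (π : List (Fin n) → M) (X : Set M) : Prop :=
  {w : List (Fin n) | π w ∈ X} ∈ C n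

/-- `X ⊆ M` is a `C^∃`-subset of `M` w.r.t. the generating map `π`:
some language of the class `C` is mapped onto `X` by `π`. -/
def CExists (C : LangClass) {n : ℕ} {M : Type} [Monoid M]
    (π : List (Fin n) → M) (X : Set M) : Prop :=
  ∃ L ∈ C n, π '' L = X

/-- Closure under inverse images of homomorphisms of free monoids on finite alphabets.
Such a homomorphism is determined by its values `f i` on letters, sending `w` to `w.flatMap f`. -/
def ClosedUnderInvHom (C : LangClass) : Prop :=
  ∀ (m n : ℕ) (f : Fin m → List (Fin n)), ∀ L ∈ C n,
    {w : List (Fin m) | w.flatMap f ∈ L} ∈ C m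

/-- Closure under images of homomorphisms of free monoids on finite alphabets. -/
def ClosedUnderHom (C : LangClass) : Prop :=
  ∀ (m n : ℕ) (f : Fin m → List (Fin n)), ∀ L ∈ C m,
    (fun w : List (Fin m) => w.flatMap f) '' L ∈ C n

/-- A language over `Fin n` is regular if it is accepted by a DFA with finitely many states. -/
def IsRegularLang {n : ℕ} (L : Set (List (Fin n))) : Prop :=
  ∃ (σ : Type) (_ : Fintype σ) (A : DFA (Fin n) σ), ∀ w : List (Fin n), w ∈ A.accepts ↔ w ∈ L

/-- Closure under intersection with regular languages. -/
def ClosedUnderInterReg (C : LangClass) : Prop :=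
  ∀ (n : ℕ), ∀ L ∈ C n, ∀ R : Set (List (Fin n)), IsRegularLang R → L ∩ R ∈ C n

/-- Closure under (binary) union. -/
def ClosedUnderUnion (C : LangClass) : Prop :=
  ∀ (n : ℕ), ∀ L₁ ∈ C n, ∀ L₂ ∈ C n, L₁ ∪ L₂ ∈ C n

/-- A cone: a class of languages closed under homomorphisms, inverse homomorphisms,
and intersection with regular languages. -/
def IsCone (C : LangClass) : Prop :=
  ClosedUnderHom C ∧ ClosedUnderInvHom C ∧ ClosedUnderInterReg C

/-- A full semi-AFL: a cone closed under union. -/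
def IsFullSemiAFL (C : LangClass) : Prop :=
  IsCone C ∧ ClosedUnderUnion C

/-- `G` is `C^∀`-flat as a group: for every finitely generated subgroup `H ≤ G`
(presented by a finite monoid generating map `ρ`), a subset of `H` is a `C^∀`-subset
of `G` iff it is a `C^∀`-subset of `H`; i.e. `C^∀(G | H) = C^∀(H)`. -/
def GroupCForallFlat (C : LangClass) (G : Type) [Group G] : Prop :=
  ∀ (H : Subgroup G) (n k : ℕ) (π : List (Fin n) → G) (ρ : List (Fin k) → ↥H),
    FreeHomOnto G π → FreeHomOnto (↥H) ρ →
      ∀ X : Set G, X ⊆ (H : Set G) →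
        (CForall C π X ↔ CForall C ρ (Subtype.val ⁻¹' X))

/-- `G` is `C^∃`-flat as a group: for every finitely generated subgroup `H ≤ G`,
a subset of `H` is a `C^∃`-subset of `G` iff it is a `C^∃`-subset of `H`;
i.e. `C^∃(G | H) = C^∃(H)`. -/
def GroupCExistsFlat (C : LangClass) (G : Type) [Group G] : Prop :=
  ∀ (H : Subgroup G) (n k : ℕ) (π : List (Fin n) → G) (ρ : List (Fin k) → ↥H),
    FreeHomOnto G π → FreeHomOnto (↥H) ρ →
      ∀ X : Set G, X ⊆ (H : Set G) →
        (CExists C π X ↔ CExists C ρ (Subtype.val ⁻¹' X))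

/-- `M` is `C^∀`-flat as a monoid: for every finitely generated submonoid `N ≤ M`,
a subset of `N` is a `C^∀`-subset of `M` iff it is a `C^∀`-subset of `N`;
i.e. `C^∀(M | N) = C^∀(N)`. -/
def MonoidCForallFlat (C : LangClass) (M : Type) [Monoid M] : Prop :=
  ∀ (N : Submonoid M) (n k : ℕ) (π : List (Fin n) → M) (ρ : List (Fin k) → ↥N),
    FreeHomOnto M π → FreeHomOnto (↥N) ρ →
      ∀ X : Set M, X ⊆ (N : Set M) →
        (CForall C π X ↔ CForall C ρ (Subtype.val ⁻¹' X))

/-- `M` is `C^∃`-flat as a monoid: for every finitely generated submonoid `N ≤ M`,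
a subset of `N` is a `C^∃`-subset of `M` iff it is a `C^∃`-subset of `N`;
i.e. `C^∃(M | N) = C^∃(N)`. -/
def MonoidCExistsFlat (C : LangClass) (M : Type) [Monoid M] : Prop :=
  ∀ (N : Submonoid M) (n k : ℕ) (π : List (Fin n) → M) (ρ : List (Fin k) → ↥N),
    FreeHomOnto M π → FreeHomOnto (↥N) ρ →
      ∀ X : Set M, X ⊆ (N : Set M) →
        (CExists C π X ↔ CExists C ρ (Subtype.val ⁻¹' X))
/-- The class `REC` of decidable (recursive) languages over finite alphabets. -/
def RECClass : LangClass := fun n => {L | ComputablePred (fun w : List (Fin n) => w ∈ L)}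


section Aux

open Nat

/-- Membership in `Nat.rfindOpt` when all output values agree. -/
lemma mem_rfindOpt_of_agree {α : Type*} {f : ℕ → Option α} {b : α}
    (h1 : ∃ n a, a ∈ f n) (h2 : ∀ n a, a ∈ f n → a = b) : b ∈ Nat.rfindOpt f := by
  have hd := Nat.rfindOpt_dom.2 h1
  obtain ⟨n, hn⟩ := Nat.rfindOpt_spec (Part.get_mem hd)
  have hb := h2 n _ hn
  rw [← hb]
  exact Part.get_mem hd

/-- Translating a monoid generating map along letter-wise choices. -/
lemma flatMap_pi_eq {n m : ℕ} {M : Type} [Monoid M] (π : List (Fin n) → M)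
    (hπ : FreeHomOnto M π) (ψ : List (Fin m) → M) (hnil : ψ [] = 1)
    (happ : ∀ u v, ψ (u ++ v) = ψ u * ψ v) (f : Fin m → List (Fin n))
    (hf : ∀ i, π (f i) = ψ [i]) : ∀ w, π (w.flatMap f) = ψ w := by
  intro w
  induction w with
  | nil => simpa [hπ.map_nil] using hnil.symm
  | cons i w ih =>
      have : (i :: w) = [i] ++ w := rfl
      rw [List.flatMap_cons, hπ.map_append, ih, hf, this, happ]

/-- Inverse words. -/
lemma flatMap_inv_eq {n : ℕ} {G : Type} [Group G] (π : List (Fin n) → G)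
    (hπ : FreeHomOnto G π) (invf : Fin n → List (Fin n))
    (hf : ∀ i, π (invf i) = (π [i])⁻¹) : ∀ u, π (u.reverse.flatMap invf) = (π u)⁻¹ := by
  intro u
  induction u with
  | nil => simp [hπ.map_nil]
  | cons i u ih =>
      have h1 : (i :: u) = [i] ++ u := rfl
      rw [List.reverse_cons, List.flatMap_append, hπ.map_append, ih,
        List.flatMap_cons, List.flatMap_nil, List.append_nil, hf, h1, hπ.map_append,
        mul_inv_rev]

lemma comp_flatMap_computable {m n : ℕ} (f : Fin m → List (Fin n)) :
    Computable fun w : List (Fin m) => w.flatMap f :=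
  (Primrec.list_flatMap Primrec.id
    (((Primrec.dom_finite f).comp Primrec.snd).to₂ :
      Primrec₂ fun (_ : List (Fin m)) (i : Fin m) => f i)).to_comp

end Aux

/-- A finitely generated group `G` is `REC^∀`-flat as a group iff
`G` has decidable subgroup membership problem: for every finitely generated subgroup
`H ≤ G`, the language `π⁻¹(H)` of words representing elements of `H` is decidable. -/
theorem stmt17 {G : Type} [Group G] {n : ℕ}
    (π : List (Fin n) → G) (hπ : FreeHomOnto G π) :
    GroupCForallFlat RECClass G ↔
      ∀ H : Subgroup G, (∃ (k : ℕ) (ρ : List (Fin k) → ↥H), FreeHomOnto (↥H) ρ) →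
        ComputablePred (fun w : List (Fin n) => π w ∈ H) := by
  classical
  constructor
  · -- flat → decidable membership
    intro hflat H ⟨k, ρ, hρ⟩
    have h := hflat H n k π ρ hπ hρ (H : Set G) subset_rfl
    have hright : CForall RECClass ρ (Subtype.val ⁻¹' (H : Set G)) := by
      refine ComputablePred.computable_iff.2 ⟨fun _ => true, Computable.const true, ?_⟩
      funext v
      simp [Set.mem_preimage, SetLike.mem_coe, (ρ v).2]
    have hleft := h.2 hright
    exact hleft.of_eq fun w => by simp [SetLike.mem_coe]
  · -- decidable membership → flat
    intro hdec H n' k π' ρ hπ' hρ X hX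
    -- decidable membership in H and in ⊥ (word problem)
    have hmem : ComputablePred (fun w : List (Fin n) => π w ∈ H) := hdec H ⟨k, ρ, hρ⟩
    have hρ0 : FreeHomOnto (↥(⊥ : Subgroup G)) (fun _ : List (Fin 0) => 1) := by
      refine ⟨rfl, fun _ _ => (mul_one 1).symm, fun x => ⟨[], ?_⟩⟩
      exact Subtype.ext (Subgroup.mem_bot.1 x.2).symm
    have hwp : ComputablePred (fun w : List (Fin n) => π w ∈ (⊥ : Subgroup G)) :=
      hdec ⊥ ⟨0, fun _ => 1, hρ0⟩
    obtain ⟨mb, mbC, mbE⟩ := ComputablePred.computable_iff.1 hmem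
    obtain ⟨wp, wpC, wpE⟩ := ComputablePred.computable_iff.1 hwp
    have mbE' : ∀ u, mb u = true ↔ π u ∈ H := fun u => (iff_of_eq (congrFun mbE u)).symm
    have wpE' : ∀ u, wp u = true ↔ π u = 1 := fun u => by
      rw [← Subgroup.mem_bot (x := π u)]; exact (iff_of_eq (congrFun wpE u)).symm
    -- letter translations
    choose t' ht' using fun i : Fin n' => hπ.surjective (π' [i])
    choose s hs using fun j : Fin k => hπ.surjective ((ρ [j] : G))
    choose invf hinvf using fun i : Fin n => hπ.surjective ((π [i])⁻¹)
    have htr : ∀ w : List (Fin n'), π (w.flatMap t') = π' w :=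
      flatMap_pi_eq π hπ π' hπ'.map_nil hπ'.map_append t' ht'
    have hsv : ∀ v : List (Fin k), π (v.flatMap s) = (ρ v : G) := by
      refine flatMap_pi_eq π hπ (fun v => (ρ v : G)) ?_ ?_ s hs
      · show (ρ [] : G) = 1; rw [hρ.map_nil]; rfl
      · intro u v; show (ρ (u ++ v) : G) = _; rw [hρ.map_append]; rfl
    have hinv : ∀ u : List (Fin n), π (u.reverse.flatMap invf) = (π u)⁻¹ :=
      flatMap_inv_eq π hπ invf hinvf
    constructor
    · -- C(G) → C(H)
      intro hCX
      obtain ⟨f', f'C, f'E⟩ := ComputablePred.computable_iff.1 hCX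
      choose s' hs' using fun j : Fin k => hπ'.surjective ((ρ [j] : G))
      have hsv' : ∀ v : List (Fin k), π' (v.flatMap s') = (ρ v : G) := by
        refine flatMap_pi_eq π' hπ' (fun v => (ρ v : G)) ?_ ?_ s' hs'
        · show (ρ [] : G) = 1; rw [hρ.map_nil]; rfl
        · intro u v; show (ρ (u ++ v) : G) = _; rw [hρ.map_append]; rfl
      refine ComputablePred.computable_iff.2
        ⟨fun v => f' (v.flatMap s'), f'C.comp (comp_flatMap_computable s'), ?_⟩
      funext v
      have := congrFun f'E (v.flatMap s')
      simp only [Set.mem_setOf_eq, Set.mem_preimage] at *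
      rw [← hsv' v]
      exact this
    · -- C(H) → C(G)
      intro hCρ
      obtain ⟨d, dC, dE⟩ := ComputablePred.computable_iff.1 hCρ
      have dE' : ∀ v, d v = true ↔ (ρ v : G) ∈ X := fun v =>
        (iff_of_eq (congrFun dE v)).symm
      -- the test: does v represent the same element as w?
      set T : List (Fin n') → List (Fin k) → Bool := fun w v =>
        wp ((v.flatMap s) ++ ((w.flatMap t').reverse.flatMap invf)) with hT
      have Tspec : ∀ w v, T w v = true ↔ (ρ v : G) = π' w := by
        intro w v
        rw [hT]
        rw [wpE', hπ.map_append, hsv, hinv, htr, mul_inv_eq_one]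
      -- the search function
      set fB : List (Fin n') → ℕ → Option Bool := fun w m =>
        bif mb (w.flatMap t') then
          (Encodable.decode (α := List (Fin k)) m).bind
            (fun v => bif T w v then some (d v) else none)
        else some false with hfB
      have fBC : Computable₂ fB := by
        refine Computable.cond (mbC.comp ((comp_flatMap_computable t').comp Computable.fst))
          ?_ (Computable.const (some false))
        refine Computable.option_bind (Computable.decode.comp Computable.snd) ?_
        refine Computable.cond ?_ ((Computable.option_some).comp (dC.comp Computable.snd))
          (Computable.const none)
        have : Primrec fun q : (List (Fin n') × ℕ) × List (Fin k) =>
            (q.2.flatMap s) ++ ((q.1.1.flatMap t').reverse.flatMap invf) := by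
          have h1 : Primrec fun q : (List (Fin n') × ℕ) × List (Fin k) => q.2.flatMap s :=
            Primrec.list_flatMap Primrec.snd
              (((Primrec.dom_finite s).comp Primrec.snd).to₂)
          have h2 : Primrec fun q : (List (Fin n') × ℕ) × List (Fin k) =>
              (q.1.1.flatMap t').reverse.flatMap invf := by
            have h3 : Primrec fun q : (List (Fin n') × ℕ) × List (Fin k) =>
                (q.1.1.flatMap t').reverse :=
              Primrec.list_reverse.comp
                (Primrec.list_flatMap (Primrec.fst.comp Primrec.fst)
                  (((Primrec.dom_finite t').comp Primrec.snd).to₂))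
            exact Primrec.list_flatMap h3 (((Primrec.dom_finite invf).comp Primrec.snd).to₂)
          exact Primrec.list_append.comp h1 h2
        exact wpC.comp this.to_comp
      have hPart : Partrec fun w : List (Fin n') => Nat.rfindOpt (fB w) :=
        Partrec.rfindOpt fBC
      -- totality
      have htot : ∀ w : List (Fin n'),
          (decide (π' w ∈ X)) ∈ Nat.rfindOpt (fB w) := by
        intro w
        by_cases hH : π' w ∈ H
        · have hmb : mb (w.flatMap t') = true := (mbE' _).2 (by rw [htr]; exact hH)
          obtain ⟨v0, hv0⟩ := hρ.surjective ⟨π' w, hH⟩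
          have hv0' : (ρ v0 : G) = π' w := by rw [hv0]
          refine mem_rfindOpt_of_agree ⟨Encodable.encode v0, d v0, ?_⟩ ?_
          · simp only [hfB, hmb, cond_true, Encodable.encodek, Option.bind_some,
              (Tspec w v0).2 hv0', Option.mem_def]
          · intro m a ha
            simp only [hfB, hmb, cond_true, Option.mem_def, Option.bind_eq_some_iff] at ha
            obtain ⟨v, _, hv⟩ := ha
            by_cases hTv : T w v = true
            · simp only [hTv, cond_true, Option.some_inj] at hv
              have : (ρ v : G) = π' w := (Tspec w v).1 hTv
              subst hv
              rw [Bool.eq_iff_iff, dE' v, this, decide_eq_true_eq]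
            · rw [Bool.not_eq_true] at hTv
              simp [hTv] at hv
        · have hmb : mb (w.flatMap t') = false := by
            rw [Bool.eq_false_iff]
            intro hc
            exact hH (by rw [← htr]; exact (mbE' _).1 hc)
          have hnX : π' w ∉ X := fun hc => hH (hX hc)
          refine mem_rfindOpt_of_agree ⟨0, false, ?_⟩ ?_
          · simp [hfB, hmb]
          · intro m a ha
            simp only [hfB, hmb, cond_false, Option.mem_def, Option.some_inj] at ha
            simp [← ha, hnX]
      have gC : Computable fun w : List (Fin n') => (decide (π' w ∈ X) : Bool) :=
        hPart.of_eq_tot htot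
      refine ComputablePred.computable_iff.2 ⟨_, gC, ?_⟩
      funext w
      simp only [Set.mem_setOf_eq, decide_eq_true_eq]
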